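/- Under the Setup: for every vertex w_1 ∈ e_1 ∖ U we have N_H(w_1) ⊆ F ∖ {e_t}, and for every vertex w_2 ∈ e_t ∖ U we have N_H(w_2) ⊆ F ∖ {e_1}. Consequently N_H(e_1 ∖ U) ⊆ F ∖ {e_t} and N_H(e_t ∖ U) ⊆ F ∖ {e_1}. -/

import Mathlib

namespace BergeM

def MIsBergePath {n : ℕ} (E : Multiset (Finset (Fin n))) (k : ℕ)
    (v : Fin (k + 1) → Fin n) (f : Fin k → Finset (Fin n)) : Prop :=
  Function.Injective v ∧ (↑(List.ofFn f) : Multiset (Finset (Fin n))) ≤ E ∧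
    ∀ i : Fin k, v i.castSucc ∈ f i ∧ v i.succ ∈ f i

def MHasBergePath {n : ℕ} (E : Multiset (Finset (Fin n))) (k : ℕ) : Prop :=
  ∃ v f, MIsBergePath E k v f

def MBPFree {n : ℕ} (E : Multiset (Finset (Fin n))) (k : ℕ) : Prop :=
  ¬ MHasBergePath E k

def MConnected {n : ℕ} (E : Multiset (Finset (Fin n))) : Prop :=
  ∀ x y : Fin n, ∃ (k : ℕ) (v : Fin (k + 1) → Fin n) (f : Fin k → Finset (Fin n)),
    MIsBergePath E k v f ∧ (∃ i, v i = x) ∧ (∃ i, v i = y)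

def MUniform {n : ℕ} (E : Multiset (Finset (Fin n))) (r : ℕ) : Prop :=
  ∀ e ∈ E, e.card = r

def MIsBergeCycle {n : ℕ} (E : Multiset (Finset (Fin n))) (k : ℕ)
    (v : Fin k → Fin n) (f : Fin k → Finset (Fin n)) : Prop :=
  Function.Injective v ∧ (↑(List.ofFn f) : Multiset (Finset (Fin n))) ≤ E ∧
    ∀ i : Fin k, v i ∈ f i ∧ v ⟨(i.val + 1) % k, Nat.mod_lt _ i.pos⟩ ∈ f i

def MHasBergeCycle {n : ℕ} (E : Multiset (Finset (Fin n))) (k : ℕ) : Prop :=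
  ∃ v f, MIsBergeCycle E k v f

def edgeNbhd {n : ℕ} (E : Multiset (Finset (Fin n))) (S : Finset (Fin n)) :
    Multiset (Finset (Fin n)) :=
  E.filter fun e => (e ∩ S).Nonempty


lemma ofFn_range {α : Type*} (m : ℕ) (g : ℕ → α) :
    List.ofFn (fun i : Fin m => g i.val) = (List.range m).map g := by
  apply List.ext_getElem <;> simp

lemma trunc {n : ℕ} (E : Multiset (Finset (Fin n))) {s t : ℕ} (hst : s ≤ t) :
    MHasBergePath E t → MHasBergePath E s := by
  rintro ⟨v, f, hinj, hle, hcond⟩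
  set g : ℕ → Finset (Fin n) := fun j => if hj : j < t then f ⟨j, hj⟩ else ∅ with hg
  refine ⟨v ∘ Fin.castLE (by omega), fun i => f (Fin.castLE hst i),
    hinj.comp (Fin.castLE_injective _), ?_, ?_⟩
  · refine le_trans ?_ hle
    have h1 : List.ofFn (fun i : Fin s => f (Fin.castLE hst i)) = (List.range s).map g := by
      apply List.ext_getElem
      · simp
      · intro j h1 h2
        simp only [List.getElem_ofFn, List.getElem_map, List.getElem_range, hg]
        rw [dif_pos (by simp at h1; omega)]
        rfl
    have h2 : List.ofFn f = (List.range t).map g := by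
      apply List.ext_getElem
      · simp
      · intro j h1 h2
        simp only [List.getElem_ofFn, List.getElem_map, List.getElem_range, hg]
        rw [dif_pos (by simp at h1; omega)]
    rw [h1, h2]
    exact Multiset.coe_le.mpr ((List.range_sublist.mpr hst).map g).subperm
  · intro i
    exact hcond (Fin.castLE hst i)
lemma cycle_exists {n t : ℕ} (ht2 : 2 ≤ t)
    (E : Multiset (Finset (Fin n)))
    (e : ℕ → Finset (Fin n)) (v : ℕ → Fin n)
    (he : (↑((List.range t).map fun i => e (i + 1)) : Multiset (Finset (Fin n))) ≤ E)
    (hvinj : Set.InjOn v (Set.Icc 1 (t - 1)))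
    (hv1 : v 1 ∈ e 1) (hvt : v (t - 1) ∈ e t)
    (hvmid : ∀ i : ℕ, 2 ≤ i → i ≤ t - 1 → v (i - 1) ∈ e i ∧ v i ∈ e i)
    (w : Fin n) (hw1 : w ∈ e 1) (hwt : w ∈ e t)
    (hwU : ∀ i : ℕ, 1 ≤ i → i ≤ t - 1 → v i ≠ w) :
    MHasBergeCycle E t := by
  set V : Fin t → Fin n := fun i => if i.val + 1 < t then v (i.val + 1) else w with hVdef
  set f : Fin t → Finset (Fin n) := fun i => e ((i.val + 1) % t + 1) with hfdef
  have hVv : ∀ i : Fin t, (i.val + 1 < t ∧ V i = v (i.val + 1)) ∨ (i.val + 1 = t ∧ V i = w) := by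
    intro i
    by_cases hi : i.val + 1 < t
    · exact Or.inl ⟨hi, if_pos hi⟩
    · exact Or.inr ⟨by have := i.isLt; omega, if_neg hi⟩
  refine ⟨V, f, ?_, ?_, ?_⟩
  · intro a b hab
    rcases hVv a with ⟨h1, hva⟩ | ⟨h1, hva⟩ <;> rcases hVv b with ⟨h2, hvb⟩ | ⟨h2, hvb⟩ <;>
      rw [hva, hvb] at hab
    · have := hvinj (Set.mem_Icc.mpr ⟨by omega, by omega⟩)
        (Set.mem_Icc.mpr ⟨by omega, by omega⟩) hab
      exact Fin.ext (by omega)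
    · exact absurd hab (hwU (a.val + 1) (by omega) (by omega))
    · exact absurd hab.symm (hwU (b.val + 1) (by omega) (by omega))
    · exact Fin.ext (by omega)
  · have hl : List.ofFn f = (((List.range t).map fun i => e (i + 1)).rotate 1) := by
      apply List.ext_getElem
      · simp
      · intro j h1 h2
        rw [List.getElem_rotate]
        simp only [List.getElem_ofFn, List.getElem_map, List.getElem_range, List.length_map,
          List.length_range]
        rfl
    rw [hl]
    exact le_trans (le_of_eq (Multiset.coe_eq_coe.mpr (List.rotate_perm _ 1))) he
  · intro i
    have hfi : f i = e ((i.val + 1) % t + 1) := rfl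
    rcases hVv i with ⟨h1, hva⟩ | ⟨h1, hva⟩
    · have hm : (i.val + 1) % t = i.val + 1 := Nat.mod_eq_of_lt h1
      have hidx : (⟨(i.val + 1) % t, Nat.mod_lt _ i.pos⟩ : Fin t) = ⟨i.val + 1, h1⟩ :=
        Fin.ext hm
      constructor
      · rw [hva, hfi, hm]
        by_cases h3 : i.val + 2 < t
        · have h4 := (hvmid (i.val + 2) (by omega) (by omega)).1
          simpa using h4
        · rw [show i.val + 1 + 1 = t by omega, show i.val + 1 = t - 1 by omega]
          exact hvt
      · rw [hidx]
        rcases hVv ⟨i.val + 1, h1⟩ with ⟨h5, h6⟩ | ⟨h5, h6⟩ <;> rw [h6, hfi, hm]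
        · exact (hvmid (i.val + 2) (by omega) (by simp at h5; omega)).2
        · rw [show i.val + 1 + 1 = t from by simpa using h5]
          exact hwt
    · constructor
      · rw [hva, hfi, h1, Nat.mod_self]
        exact hw1
      · have hidx : (⟨(i.val + 1) % t, Nat.mod_lt _ i.pos⟩ : Fin t) = ⟨0, by omega⟩ :=
          Fin.ext (by simp [h1])
        rw [hidx]
        rcases hVv ⟨0, by omega⟩ with ⟨h5, h6⟩ | ⟨h5, h6⟩
        · rw [h6, hfi]
          have : (i.val + 1) % t = 0 := by simp [h1]
          convert hv1 using 2 <;> simp [this]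
        · simp at h5
          omega
lemma path_ext {n t : ℕ} (ht2 : 2 ≤ t)
    (E : Multiset (Finset (Fin n)))
    (e : ℕ → Finset (Fin n)) (v : ℕ → Fin n)
    (hvinj : Set.InjOn v (Set.Icc 1 (t - 1)))
    (hv1 : v 1 ∈ e 1) (hvt : v (t - 1) ∈ e t)
    (hvmid : ∀ i : ℕ, 2 ≤ i → i ≤ t - 1 → v (i - 1) ∈ e i ∧ v i ∈ e i)
    (h : Finset (Fin n))
    (hle2 : (h ::ₘ ↑((List.range t).map fun i => e (i + 1)) : Multiset (Finset (Fin n))) ≤ E)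
    (w u z : Fin n)
    (hw1 : w ∈ e 1) (hwh : w ∈ h) (huh : u ∈ h) (hzt : z ∈ e t)
    (hwU : ∀ i : ℕ, 1 ≤ i → i ≤ t - 1 → v i ≠ w)
    (huU : ∀ i : ℕ, 1 ≤ i → i ≤ t - 1 → v i ≠ u)
    (hzU : ∀ i : ℕ, 1 ≤ i → i ≤ t - 1 → v i ≠ z)
    (huw : u ≠ w) (huz : u ≠ z) (hwz : w ≠ z) :
    MHasBergePath E (t + 1) := by
  set V : Fin (t + 2) → Fin n := fun j =>
    if j.val = 0 then u else if j.val = 1 then w else if j.val = t + 1 then z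
      else v (j.val - 1) with hVdef
  set f : Fin (t + 1) → Finset (Fin n) := fun i => if i.val = 0 then h else e i.val with hfdef
  have hVv : ∀ j : Fin (t + 2), (j.val = 0 ∧ V j = u) ∨ (j.val = 1 ∧ V j = w) ∨
      (j.val = t + 1 ∧ V j = z) ∨ (2 ≤ j.val ∧ j.val ≤ t ∧ V j = v (j.val - 1)) := by
    intro j
    by_cases h0 : j.val = 0
    · exact Or.inl ⟨h0, if_pos h0⟩
    by_cases h1 : j.val = 1
    · refine Or.inr (Or.inl ⟨h1, ?_⟩)
      rw [hVdef]; simp only [h1]; norm_num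
    by_cases h2 : j.val = t + 1
    · refine Or.inr (Or.inr (Or.inl ⟨h2, ?_⟩))
      rw [hVdef]; simp only
      rw [if_neg h0, if_neg h1, if_pos h2]
    · refine Or.inr (Or.inr (Or.inr ⟨by omega, by have := j.isLt; omega, ?_⟩))
      rw [hVdef]
      simp only
      rw [if_neg h0, if_neg h1, if_neg h2]
  refine ⟨V, f, ?_, ?_, ?_⟩
  · intro a b hab
    rcases hVv a with ⟨h1, hva⟩ | ⟨h1, hva⟩ | ⟨h1, hva⟩ | ⟨h1, h1', hva⟩ <;>
      rcases hVv b with ⟨h2, hvb⟩ | ⟨h2, hvb⟩ | ⟨h2, hvb⟩ | ⟨h2, h2', hvb⟩ <;>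
      rw [hva, hvb] at hab <;>
      first
        | (exact Fin.ext (by omega))
        | (exact absurd hab.symm huw.symm)
        | (exact absurd hab huw.symm)
        | (exact absurd hab huz)
        | (exact absurd hab.symm huz)
        | (exact absurd hab hwz)
        | (exact absurd hab.symm hwz)
        | (exact absurd hab.symm (huU (b.val - 1) (by omega) (by omega)))
        | (exact absurd hab (huU (a.val - 1) (by omega) (by omega)))
        | (exact absurd hab.symm (hwU (b.val - 1) (by omega) (by omega)))
        | (exact absurd hab (hwU (a.val - 1) (by omega) (by omega)))
        | (exact absurd hab.symm (hzU (b.val - 1) (by omega) (by omega)))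
        | (exact absurd hab (hzU (a.val - 1) (by omega) (by omega)))
        | (exact Fin.ext (by
            have := hvinj (Set.mem_Icc.mpr ⟨by omega, by omega⟩)
              (Set.mem_Icc.mpr ⟨by omega, by omega⟩) hab
            omega))
  · have hl : List.ofFn f = h :: ((List.range t).map fun i => e (i + 1)) := by
      apply List.ext_getElem
      · simp
      · intro j h1 h2
        cases j with
        | zero => simp [hfdef]
        | succ j =>
          simp only [List.getElem_ofFn, List.getElem_cons_succ, List.getElem_map,
            List.getElem_range, hfdef]
          rw [if_neg (by omega)]
    rw [hl, ← Multiset.cons_coe]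
    exact hle2
  · intro i
    have hfi : f i = if i.val = 0 then h else e i.val := rfl
    have hcs : (i.castSucc : Fin (t + 2)).val = i.val := rfl
    have hsc : (i.succ : Fin (t + 2)).val = i.val + 1 := rfl
    by_cases h0 : i.val = 0
    · constructor
      · rcases hVv i.castSucc with ⟨h1, hva⟩ | ⟨h1, hva⟩ | ⟨h1, hva⟩ | ⟨h1, h1', hva⟩ <;>
          rw [hcs] at h1 <;> try omega
        rw [hva, hfi, if_pos h0]
        exact huh
      · rcases hVv i.succ with ⟨h1, hva⟩ | ⟨h1, hva⟩ | ⟨h1, hva⟩ | ⟨h1, h1', hva⟩ <;>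
          rw [hsc] at h1 <;> try omega
        · rw [hva, hfi, if_pos h0]
          exact hwh
    · constructor
      · rcases hVv i.castSucc with ⟨h1, hva⟩ | ⟨h1, hva⟩ | ⟨h1, hva⟩ | ⟨h1, h1', hva⟩ <;>
          rw [hcs] at h1 <;> [omega; skip; (have := i.isLt; omega); skip]
        · -- i.val = 1 : w ∈ e 1
          rw [hva, hfi, if_neg h0, h1]
          exact hw1
        · -- 2 ≤ i.val ≤ t : v (i.val - 1) ∈ e i.val
          rw [hva, hfi, if_neg h0, hcs]
          rcases Nat.lt_or_ge i.val t with h3 | h3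
          · exact (hvmid i.val (by omega) (by omega)).1
          · have h4 : i.val = t := by have := i.isLt; omega
            rw [h4]
            exact hvt
      · rcases hVv i.succ with ⟨h1, hva⟩ | ⟨h1, hva⟩ | ⟨h1, hva⟩ | ⟨h1, h1', hva⟩ <;>
          rw [hsc] at h1 <;> [omega; omega; skip; skip]
        · -- i.val + 1 = t + 1 : z ∈ e t
          rw [hva, hfi, if_neg h0, show i.val = t by omega]
          exact hzt
        · -- 2 ≤ i.val + 1 ≤ t : v i.val ∈ e i.val
          rw [hva, hfi, if_neg h0, hsc, Nat.add_sub_cancel]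
          rcases Nat.eq_or_lt_of_le (show 1 ≤ i.val by omega) with h3 | h3
          · rw [← h3]
            exact hv1
          · exact (hvmid i.val (by omega) (by omega)).2
lemma range_map_split {α : Type*} (t : ℕ) (ht : 1 ≤ t) (g : ℕ → α) :
    ((List.range t).map g : List α) = ((List.range (t - 1)).map g) ++ [g (t - 1)] := by
  conv_lhs => rw [show t = (t - 1) + 1 by omega, List.range_succ]
  rw [List.map_append]
  rfl

lemma mem_et {n : ℕ} (t : ℕ) (ht : 1 ≤ t) (e : ℕ → Finset (Fin n)) :
    e t ∈ ((List.range t).map fun i => e (i + 1) : List (Finset (Fin n))) := by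
  rw [List.mem_map]
  exact ⟨t - 1, List.mem_range.mpr (by omega), by rw [show t - 1 + 1 = t by omega]⟩

lemma key {n r t : ℕ} (ht2 : 2 ≤ t) (htr : t < r)
    (E : Multiset (Finset (Fin n))) (hu : MUniform E r)
    (hmax : ∀ s : ℕ, MHasBergePath E s → s ≤ t)
    (hcyc : ¬ MHasBergeCycle E t)
    (e : ℕ → Finset (Fin n)) (v : ℕ → Fin n)
    (he : (↑((List.range t).map fun i => e (i + 1)) : Multiset (Finset (Fin n))) ≤ E)
    (hvinj : Set.InjOn v (Set.Icc 1 (t - 1)))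
    (hv1 : v 1 ∈ e 1) (hvt : v (t - 1) ∈ e t)
    (hvmid : ∀ i : ℕ, 2 ≤ i → i ≤ t - 1 → v (i - 1) ∈ e i ∧ v i ∈ e i)
    (w : Fin n) (hw1 : w ∈ e 1)
    (hwU : ∀ i : ℕ, 1 ≤ i → i ≤ t - 1 → v i ≠ w) :
    edgeNbhd E {w} ≤
      (↑((List.range (t - 1)).map fun i => e (i + 1)) : Multiset (Finset (Fin n))) := by
  classical
  rw [Multiset.le_iff_count]
  intro h
  rw [edgeNbhd, Multiset.count_filter]
  split_ifs with hwh
  swap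
  · exact Nat.zero_le _
  have hwmem : w ∈ h := by
    obtain ⟨x, hx⟩ := hwh
    rw [Finset.mem_inter, Finset.mem_singleton] at hx
    exact hx.2 ▸ hx.1
  by_contra hlt
  push_neg at hlt
  by_cases hwt : w ∈ e t
  · exact hcyc (cycle_exists ht2 E e v he hvinj hv1 hvt hvmid w hw1 hwt hwU)
  have hht : h ≠ e t := fun hh => hwt (hh ▸ hwmem)
  have hcount : Multiset.count h (↑((List.range t).map fun i => e (i + 1)) :
      Multiset (Finset (Fin n))) =
      Multiset.count h (↑((List.range (t - 1)).map fun i => e (i + 1)) :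
      Multiset (Finset (Fin n))) := by
    rw [range_map_split t (by omega), show t - 1 + 1 = t by omega, ← Multiset.coe_add,
      Multiset.count_add]
    have : Multiset.count h (↑([e t]) : Multiset (Finset (Fin n))) = 0 := by
      simp [Multiset.count_singleton, hht]
    rw [this, Nat.add_zero]
  have hle2 : (h ::ₘ ↑((List.range t).map fun i => e (i + 1)) : Multiset (Finset (Fin n))) ≤ E := by
    rw [Multiset.le_iff_count]
    intro x
    rw [Multiset.count_cons]
    by_cases hx : x = h
    · subst hx
      rw [if_pos rfl, hcount]
      omega
    · rw [if_neg hx, Nat.add_zero]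
      exact Multiset.count_le_of_le x he
  have hhE : h ∈ E := Multiset.mem_of_le hle2 (Multiset.mem_cons_self h _)
  have hcardh : h.card = r := hu h hhE
  have hetE : e t ∈ E := Multiset.mem_of_le he (by
    rw [Multiset.mem_coe]
    exact mem_et t (by omega) e)
  have hcardt : (e t).card = r := hu (e t) hetE
  set S : Finset (Fin n) := (Finset.Icc 1 (t - 1)).image v with hS
  have hScard : S.card ≤ t - 1 :=
    le_trans Finset.card_image_le (by rw [Nat.card_Icc]; omega)
  obtain ⟨u, huh, huS⟩ : ∃ u ∈ h, u ∉ S ∪ {w} := by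
    rw [← Finset.not_subset]
    intro hsub
    have := Finset.card_le_card hsub
    have := Finset.card_union_le S {w}
    simp only [Finset.card_singleton] at this
    omega
  obtain ⟨z, hzt, hzS⟩ : ∃ z ∈ e t, z ∉ S ∪ {u} := by
    rw [← Finset.not_subset]
    intro hsub
    have := Finset.card_le_card hsub
    have := Finset.card_union_le S ({u} : Finset (Fin n))
    simp only [Finset.card_singleton] at this
    omega
  rw [Finset.mem_union, Finset.mem_singleton] at huS hzS
  push_neg at huS hzS
  have hmemS : ∀ x : Fin n, x ∉ S → ∀ i : ℕ, 1 ≤ i → i ≤ t - 1 → v i ≠ x := by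
    intro x hx i hi1 hi2 hvx
    exact hx (Finset.mem_image.mpr ⟨i, Finset.mem_Icc.mpr ⟨hi1, hi2⟩, hvx⟩)
  have hpath : MHasBergePath E (t + 1) :=
    path_ext ht2 E e v hvinj hv1 hvt hvmid h hle2 w u z hw1 hwmem huh hzt
      hwU (hmemS u huS.1) (hmemS z hzS.1)
      huS.2 (fun hzu => hzS.2 hzu.symm) (fun hwz => hwt (hwz ▸ hzt))
  have := hmax (t + 1) hpath
  omega


theorem stmt13    (n r k t : ℕ) (hk : 3 ≤ k) (hrk : k ≤ r) (hn : r < n)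
    (E : Multiset (Finset (Fin n))) (hu : MUniform E r) (hc : MConnected E)
    (hf : MBPFree E k)
    (ht : MHasBergePath E t) (hmax : ∀ s : ℕ, MHasBergePath E s → s ≤ t)
    (hcyc : ¬ MHasBergeCycle E t)
    (e : ℕ → Finset (Fin n)) (v : ℕ → Fin n)
    (he : (↑((List.range t).map fun i => e (i + 1)) : Multiset (Finset (Fin n))) ≤ E)
    (hvinj : Set.InjOn v (Set.Icc 1 (t - 1)))
    (hv1 : v 1 ∈ e 1) (hvt : v (t - 1) ∈ e t)
    (hvmid : ∀ i : ℕ, 2 ≤ i → i ≤ t - 1 → v (i - 1) ∈ e i ∧ v i ∈ e i)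
 :
    (∀ w ∈ e 1 \ (Finset.Icc 1 (t - 1)).image v,
        edgeNbhd E {w} ≤
          (↑((List.range (t - 1)).map fun i => e (i + 1)) : Multiset (Finset (Fin n)))) ∧
    (∀ w ∈ e t \ (Finset.Icc 1 (t - 1)).image v,
        edgeNbhd E {w} ≤
          (↑((List.range (t - 1)).map fun i => e (i + 2)) : Multiset (Finset (Fin n)))) ∧
    edgeNbhd E (e 1 \ (Finset.Icc 1 (t - 1)).image v) ≤
      (↑((List.range (t - 1)).map fun i => e (i + 1)) : Multiset (Finset (Fin n))) ∧
    edgeNbhd E (e t \ (Finset.Icc 1 (t - 1)).image v) ≤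
      (↑((List.range (t - 1)).map fun i => e (i + 2)) : Multiset (Finset (Fin n))) := by
  classical
  have ht1 : 1 ≤ t := by
    obtain ⟨k₀, v₀, f₀, hp, ⟨i, hi⟩, ⟨j, hj⟩⟩ := hc ⟨0, by omega⟩ ⟨1, by omega⟩
    have hk₀ : 1 ≤ k₀ := by
      by_contra hkc
      push_neg at hkc
      interval_cases k₀
      have hij : i = j := Fin.ext (by have := i.isLt; have := j.isLt; omega)
      rw [hij, hj] at hi
      have := congrArg Fin.val hi
      simp at this
    exact le_trans hk₀ (hmax k₀ ⟨v₀, f₀, hp⟩)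
  have ht2 : 2 ≤ t := by
    rcases Nat.lt_or_ge t 2 with hlt | hge
    · exfalso
      have ht1' : t = 1 := by omega
      subst ht1'
      apply hcyc
      refine ⟨fun _ => v 1, fun _ => e 1, ?_, ?_, ?_⟩
      · intro a b _
        exact Fin.ext (by have := a.isLt; have := b.isLt; omega)
      · have hone : (List.ofFn fun _ : Fin 1 => e 1) = [e 1] := by simp
        rw [hone]
        simpa [List.range_succ] using he
      · intro i
        exact ⟨hv1, hv1⟩
    · exact hge
  have htk : t < k := by
    by_contra hge
    push_neg at hge
    exact hf (trunc E hge ht)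
  have htr : t < r := lt_of_lt_of_le htk hrk
  have goal1 : ∀ w ∈ e 1 \ (Finset.Icc 1 (t - 1)).image v,
      edgeNbhd E {w} ≤
        (↑((List.range (t - 1)).map fun i => e (i + 1)) : Multiset (Finset (Fin n))) := by
    intro w hw
    rw [Finset.mem_sdiff] at hw
    refine key ht2 htr E hu hmax hcyc e v he hvinj hv1 hvt hvmid w hw.1 ?_
    intro i hi1 hi2 hvw
    exact hw.2 (Finset.mem_image.mpr ⟨i, Finset.mem_Icc.mpr ⟨hi1, hi2⟩, hvw⟩)
  -- reversed data
  set e' : ℕ → Finset (Fin n) := fun i => e (t + 1 - i) with he'def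
  set v' : ℕ → Fin n := fun i => v (t - i) with hv'def
  have hrev : ((List.range t).map fun i => e' (i + 1) : List (Finset (Fin n))) =
      ((List.range t).map fun i => e (i + 1)).reverse := by
    apply List.ext_getElem
    · simp
    · intro j h1 h2
      rw [List.getElem_reverse]
      simp only [List.getElem_map, List.getElem_range, List.length_map, List.length_range]
      simp only [List.length_map, List.length_range] at h1
      show e (t + 1 - (j + 1)) = e (t - 1 - j + 1)
      congr 1
      omega
  have hee' : (↑((List.range t).map fun i => e' (i + 1)) : Multiset (Finset (Fin n))) ≤ E := by
    rw [hrev, Multiset.coe_reverse]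
    exact he
  have hvinj' : Set.InjOn v' (Set.Icc 1 (t - 1)) := by
    intro a ha b hb hab
    rw [Set.mem_Icc] at ha hb
    have := hvinj (Set.mem_Icc.mpr ⟨by omega, by omega⟩)
      (Set.mem_Icc.mpr ⟨by omega, by omega⟩) hab
    omega
  have hv1' : v' 1 ∈ e' 1 := hvt
  have hvt' : v' (t - 1) ∈ e' t := by
    show v (t - (t - 1)) ∈ e (t + 1 - t)
    rw [show t - (t - 1) = 1 by omega, show t + 1 - t = 1 by omega]
    exact hv1
  have hvmid' : ∀ i : ℕ, 2 ≤ i → i ≤ t - 1 → v' (i - 1) ∈ e' i ∧ v' i ∈ e' i := by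
    intro i hi2 hi3
    have hj := hvmid (t + 1 - i) (by omega) (by omega)
    constructor
    · show v (t - (i - 1)) ∈ e (t + 1 - i)
      rw [show t - (i - 1) = t + 1 - i by omega]
      exact hj.2
    · show v (t - i) ∈ e (t + 1 - i)
      rw [show t - i = t + 1 - i - 1 by omega]
      exact hj.1
  have himg : (Finset.Icc 1 (t - 1)).image v = (Finset.Icc 1 (t - 1)).image v' := by
    ext x
    simp only [Finset.mem_image, Finset.mem_Icc]
    constructor
    · rintro ⟨i, ⟨hi1, hi2⟩, hx⟩
      refine ⟨t - i, ⟨by omega, by omega⟩, ?_⟩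
      show v (t - (t - i)) = x
      rw [show t - (t - i) = i by omega]
      exact hx
    · rintro ⟨i, ⟨hi1, hi2⟩, hx⟩
      exact ⟨t - i, ⟨by omega, by omega⟩, hx⟩
  have hconv : (↑((List.range (t - 1)).map fun i => e' (i + 1)) : Multiset (Finset (Fin n))) =
      (↑((List.range (t - 1)).map fun i => e (i + 2)) : Multiset (Finset (Fin n))) := by
    have hl : ((List.range (t - 1)).map fun i => e' (i + 1) : List (Finset (Fin n))) =
        ((List.range (t - 1)).map fun i => e (i + 2)).reverse := by
      apply List.ext_getElem
      · simp
      · intro j h1 h2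
        rw [List.getElem_reverse]
        simp only [List.getElem_map, List.getElem_range, List.length_map, List.length_range]
        simp only [List.length_map, List.length_range] at h1
        show e (t + 1 - (j + 1)) = e (t - 1 - 1 - j + 2)
        congr 1
        omega
    rw [hl, Multiset.coe_reverse]
  have goal2 : ∀ w ∈ e t \ (Finset.Icc 1 (t - 1)).image v,
      edgeNbhd E {w} ≤
        (↑((List.range (t - 1)).map fun i => e (i + 2)) : Multiset (Finset (Fin n))) := by
    intro w hw
    rw [Finset.mem_sdiff] at hw
    have hw1' : w ∈ e' 1 := by
      show w ∈ e (t + 1 - 1)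
      rw [show t + 1 - 1 = t by omega]
      exact hw.1
    have hwU' : ∀ i : ℕ, 1 ≤ i → i ≤ t - 1 → v' i ≠ w := by
      intro i hi1 hi2 hvw
      exact hw.2 (Finset.mem_image.mpr ⟨t - i, Finset.mem_Icc.mpr ⟨by omega, by omega⟩, hvw⟩)
    have hkey := key ht2 htr E hu hmax hcyc e' v' hee' hvinj' hv1' hvt' hvmid' w hw1' hwU'
    rw [hconv] at hkey
    exact hkey
  have bigstep : ∀ (T : Finset (Fin n)) (L : List (Finset (Fin n))),
      (∀ w ∈ T, edgeNbhd E {w} ≤ (↑L : Multiset (Finset (Fin n)))) →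
      edgeNbhd E T ≤ (↑L : Multiset (Finset (Fin n))) := by
    intro T L hT
    rw [Multiset.le_iff_count]
    intro h
    rw [edgeNbhd, Multiset.count_filter]
    split_ifs with hP
    · obtain ⟨x, hx⟩ := hP
      rw [Finset.mem_inter] at hx
      have h1 := Multiset.count_le_of_le h (hT x hx.2)
      rw [edgeNbhd, Multiset.count_filter,
        if_pos ⟨x, Finset.mem_inter.mpr ⟨hx.1, Finset.mem_singleton_self x⟩⟩] at h1
      exact h1
    · exact Nat.zero_le _
  exact ⟨goal1, goal2, bigstep _ _ goal1, bigstep _ _ goal2⟩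


end BergeM
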